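/- Let X be a metric space, n ≥ 2, and p : Fin n → X a family of points. Let r be a feasible system of radii attaining the maximum of ∑_i r i over all feasible systems, and let σ be a derangement of Fin n attaining the minimum of ∑_i dist (p i) (p (σ i)) over all derangements. Then for every index i, r i + r (σ i) = dist (p i) (p (σ i)). (Complementary slackness: every edge of a minimum cycle cover is realized by a pair of touching balls in every optimal system of nonoverlapping balls.) -/

import Mathlib

open Finset

/-- Auxiliary: a maximal feasible system of radii admits a derangement all of
whose edges are tight. -/
theorem exists_tight_derangement
    {X : Type*} [MetricSpace X] (n : ℕ) (p : Fin n → X)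
    (r : Fin n → ℝ)
    (hr0 : ∀ i, 0 ≤ r i)
    (hr : ∀ i j, i ≠ j → r i + r j ≤ dist (p i) (p j))
    (hropt : ∀ r' : Fin n → ℝ, (∀ i, 0 ≤ r' i) →
      (∀ i j, i ≠ j → r' i + r' j ≤ dist (p i) (p j)) → ∑ i, r' i ≤ ∑ i, r i) :
    ∃ τ : Equiv.Perm (Fin n), (∀ i, τ i ≠ i) ∧
      ∀ i, r i + r (τ i) = dist (p i) (p (τ i)) := by
  classical
  set t : Fin n → Finset (Fin n) :=
    fun i => Finset.univ.filter (fun j => i ≠ j ∧ r i + r j = dist (p i) (p j)) with ht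
  have ht_mem : ∀ i j, j ∈ t i ↔ (i ≠ j ∧ r i + r j = dist (p i) (p j)) := by
    intro i j; simp [ht]
  have ht_symm : ∀ i j, j ∈ t i → i ∈ t j := by
    intro i j hj
    rw [ht_mem] at hj ⊢
    refine ⟨hj.1.symm, ?_⟩
    rw [dist_comm]; linarith [hj.2]
  have hall : ∀ S : Finset (Fin n), S.card ≤ (S.biUnion t).card := by
    by_contra hcon
    push_neg at hcon
    obtain ⟨S, hS⟩ := hcon
    -- Step 1: pass to an "independent" violator A
    set A := S \ S.biUnion t with hA
    have hAsub : A ⊆ S := sdiff_subset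
    have hAindep : ∀ i ∈ A, ∀ j, j ∈ t i → j ∉ A := by
      intro i hi j hj hjA
      exact (mem_sdiff.mp hjA).2 (mem_biUnion.mpr ⟨i, hAsub hi, hj⟩)
    have hNAS : ∀ j ∈ A.biUnion t, j ∉ S := by
      intro j hj hjS
      obtain ⟨i, hiA, hji⟩ := mem_biUnion.mp hj
      exact (mem_sdiff.mp hiA).2 (mem_biUnion.mpr ⟨j, hjS, ht_symm i j hji⟩)
    have hcard1 : (A.biUnion t).card + (S ∩ S.biUnion t).card ≤ (S.biUnion t).card := by
      have hdisj : Disjoint (A.biUnion t) (S ∩ S.biUnion t) := by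
        rw [disjoint_left]; intro j hj hj2
        exact hNAS j hj (mem_inter.mp hj2).1
      have hsub : (A.biUnion t) ∪ (S ∩ S.biUnion t) ⊆ S.biUnion t := by
        intro j hj
        rcases mem_union.mp hj with h | h
        · obtain ⟨i, hiA, hji⟩ := mem_biUnion.mp h
          exact mem_biUnion.mpr ⟨i, hAsub hiA, hji⟩
        · exact (mem_inter.mp h).2
      calc (A.biUnion t).card + (S ∩ S.biUnion t).card
          = ((A.biUnion t) ∪ (S ∩ S.biUnion t)).card := (card_union_of_disjoint hdisj).symm
        _ ≤ (S.biUnion t).card := card_le_card hsub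
    have hcard2 : A.card + (S ∩ S.biUnion t).card = S.card := by
      rw [hA]; exact card_sdiff_add_card_inter S _
    have hAviol : (A.biUnion t).card < A.card := by omega
    -- Step 2: prune vertices of A having a tight neighbor with zero radius
    set A' := A.filter (fun i => ∀ j ∈ t i, r j ≠ 0) with hA'
    set Rm := A.filter (fun i => ¬ ∀ j ∈ t i, r j ≠ 0) with hRm
    set NAZ := (A.biUnion t).filter (fun j => r j = 0) with hNAZ
    have hA'A : A' ⊆ A := filter_subset _ _
    have hRmNAZ : Rm.card ≤ NAZ.card := by
      have hex : ∀ i, i ∈ Rm → ∃ j, j ∈ t i ∧ r j = 0 := by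
        intro i hi
        have h2 := (mem_filter.mp hi).2
        push_neg at h2
        obtain ⟨j, hj1, hj2⟩ := h2
        exact ⟨j, hj1, hj2⟩
      choose! g hg1 hg2 using hex
      apply card_le_card_of_injOn g
      · intro i hi
        rw [hNAZ, Finset.mem_coe, mem_filter]
        exact ⟨mem_biUnion.mpr ⟨i, (filter_subset _ _) hi, hg1 i hi⟩, hg2 i hi⟩
      · intro i hi i' hi' hgi
        by_contra hne
        -- clique lemma: two tight neighbors of a zero vertex are tight to each other
        have h1 := (ht_mem i (g i)).mp (hg1 i hi)
        have h2 := (ht_mem i' (g i')).mp (hg1 i' hi')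
        have hz := hg2 i hi
        rw [hgi] at h1 hz
        have htri : dist (p i) (p i') ≤ dist (p i) (p (g i')) + dist (p (g i')) (p i') :=
          dist_triangle _ _ _
        have hcomm : dist (p (g i')) (p i') = dist (p i') (p (g i')) := dist_comm _ _
        have hle := hr i i' hne
        have htight : r i + r i' = dist (p i) (p i') := by linarith [h1.2, h2.2]
        have : i' ∈ t i := (ht_mem i i').mpr ⟨hne, htight⟩
        exact hAindep i ((filter_subset _ _) hi) i' this ((filter_subset _ _) hi')
    have hA'Rm : A'.card + Rm.card = A.card := by
      rw [hA', hRm]; exact card_filter_add_card_filter_not _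
    set B := A'.biUnion t with hB
    have hBsub : B ⊆ A.biUnion t := biUnion_subset_biUnion_of_subset_left t hA'A
    have hBpos : ∀ j ∈ B, 0 < r j := by
      intro j hj
      obtain ⟨i, hiA', hji⟩ := mem_biUnion.mp hj
      have := (mem_filter.mp hiA').2 j hji
      exact lt_of_le_of_ne (hr0 j) (Ne.symm this)
    have hcard3 : B.card + NAZ.card ≤ (A.biUnion t).card := by
      have hdisj : Disjoint B NAZ := by
        rw [disjoint_left]
        intro j hj hj2
        exact (hBpos j hj).ne' (mem_filter.mp hj2).2
      have hsub : B ∪ NAZ ⊆ A.biUnion t := by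
        intro j hj
        rcases mem_union.mp hj with h | h
        · exact hBsub h
        · exact (filter_subset _ _) h
      calc B.card + NAZ.card = (B ∪ NAZ).card := (card_union_of_disjoint hdisj).symm
        _ ≤ (A.biUnion t).card := card_le_card hsub
    have hBA' : B.card < A'.card := by omega
    have hA'B : ∀ i ∈ A', i ∉ B := by
      intro i hi hiB
      obtain ⟨i', hi'A', hii'⟩ := mem_biUnion.mp hiB
      exact hAindep i' (hA'A hi'A') i hii' (hA'A hi)
    -- Step 3: the improving perturbation
    set P := (Finset.univ : Finset (Fin n × Fin n)).filter
      (fun q => q.1 ≠ q.2 ∧ r q.1 + r q.2 < dist (p q.1) (p q.2)) with hP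
    set vals := insert (1:ℝ)
      ((B.image r) ∪ (P.image (fun q => (dist (p q.1) (p q.2) - r q.1 - r q.2)/2))) with hvals
    have hvne : vals.Nonempty := ⟨1, mem_insert_self _ _⟩
    set ε := vals.min' hvne with hεdef
    have hεle : ∀ x ∈ vals, ε ≤ x := fun x hx => min'_le _ x hx
    have hεpos : 0 < ε := by
      rw [hεdef, Finset.lt_min'_iff]
      intro b hb
      rcases mem_insert.mp hb with h | h
      · rw [h]; norm_num
      · rcases mem_union.mp h with h | h
        · obtain ⟨j, hj, rfl⟩ := mem_image.mp h
          exact hBpos j hj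
        · obtain ⟨q, hq, rfl⟩ := mem_image.mp h
          have := (mem_filter.mp hq).2.2
          linarith
    have hεB : ∀ j ∈ B, ε ≤ r j := by
      intro j hj
      exact hεle (r j) (mem_insert_of_mem (mem_union_left _ (mem_image_of_mem r hj)))
    have hεslack : ∀ i j, i ≠ j → r i + r j < dist (p i) (p j) →
        ε ≤ (dist (p i) (p j) - r i - r j)/2 := by
      intro i j hij hs
      refine hεle _ (mem_insert_of_mem (mem_union_right _ ?_))
      exact mem_image_of_mem _ (mem_filter.mpr ⟨mem_univ (i, j), hij, hs⟩)
    -- slackness of non-tight pairs touching A'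
    have hkey : ∀ i ∈ A', ∀ j, j ∉ B → i ≠ j → r i + r j < dist (p i) (p j) := by
      intro i hi j hjB hij
      have hnt : j ∉ t i := fun h => hjB (mem_biUnion.mpr ⟨i, hi, h⟩)
      have : r i + r j ≠ dist (p i) (p j) := by
        intro h; exact hnt ((ht_mem i j).mpr ⟨hij, h⟩)
      exact lt_of_le_of_ne (hr i j hij) this
    set r' : Fin n → ℝ :=
      fun i => r i + (if i ∈ A' then ε else 0) - (if i ∈ B then ε else 0) with hr'def
    have hr'0 : ∀ i, 0 ≤ r' i := by
      intro i
      rw [hr'def]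
      by_cases hiB : i ∈ B
      · have hiA : i ∉ A' := fun h => hA'B i h hiB
        simp only [hiA, hiB, if_true, if_false]
        have := hεB i hiB
        linarith
      · simp only [hiB, if_false]
        have := hr0 i
        split_ifs with h
        · linarith
        · linarith
    have hr'feas : ∀ i j, i ≠ j → r' i + r' j ≤ dist (p i) (p j) := by
      intro i j hij
      rw [hr'def]
      by_cases hiA : i ∈ A' <;> by_cases hjA : j ∈ A'
      · -- both in A': both not in B, pair is slack
        have hiB : i ∉ B := fun h => hA'B i hiA h
        have hjB : j ∉ B := fun h => hA'B j hjA h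
        have hs := hkey i hiA j hjB hij
        have hε2 := hεslack i j hij hs
        simp only [hiA, hjA, hiB, hjB, if_true, if_false]
        linarith
      · have hiB : i ∉ B := fun h => hA'B i hiA h
        by_cases hjB : j ∈ B
        · simp only [hiA, hjA, hiB, hjB, if_true, if_false]
          have := hr i j hij
          linarith
        · have hs := hkey i hiA j hjB hij
          have hε2 := hεslack i j hij hs
          simp only [hiA, hjA, hiB, hjB, if_true, if_false]
          linarith
      · have hjB : j ∉ B := fun h => hA'B j hjA h
        by_cases hiB : i ∈ B
        · simp only [hiA, hjA, hiB, hjB, if_true, if_false]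
          have := hr i j hij
          linarith
        · have hs := hkey j hjA i hiB (Ne.symm hij)
          rw [dist_comm] at hs
          have hε2 := hεslack i j hij (by linarith)
          simp only [hiA, hjA, hiB, hjB, if_true, if_false]
          linarith
      · have := hr i j hij
        simp only [hiA, hjA, if_false]
        split_ifs with h1 h2 h2 <;> linarith
    have hsum : ∑ i, r' i = ∑ i, r i + ε * A'.card - ε * B.card := by
      rw [hr'def]
      rw [Finset.sum_sub_distrib, Finset.sum_add_distrib]
      congr 1
      · congr 1
        rw [Finset.sum_ite_mem, Finset.univ_inter, Finset.sum_const, nsmul_eq_mul, mul_comm]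
      · rw [Finset.sum_ite_mem, Finset.univ_inter, Finset.sum_const, nsmul_eq_mul, mul_comm]
    have hlt : ∑ i, r i < ∑ i, r' i := by
      rw [hsum]
      have hc : (B.card : ℝ) < (A'.card : ℝ) := by exact_mod_cast hBA'
      nlinarith
    exact absurd (hropt r' hr'0 hr'feas) (not_le.mpr hlt)
  -- Hall's theorem gives the tight derangement
  obtain ⟨f, hfinj, hf⟩ := (Finset.all_card_le_biUnion_card_iff_exists_injective t).mp hall
  have hfbij : Function.Bijective f := Finite.injective_iff_bijective.mp hfinj
  refine ⟨Equiv.ofBijective f hfbij, ?_, ?_⟩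
  · intro i
    exact (((ht_mem i (f i)).mp (hf i)).1).symm
  · intro i
    exact ((ht_mem i (f i)).mp (hf i)).2

/-- Complementary slackness: every edge of a minimum cycle cover is realized by
a pair of touching balls in every optimal system of nonoverlapping balls. -/
theorem complementary_slackness_touching
    {X : Type*} [MetricSpace X] (n : ℕ) (hn : 2 ≤ n) (p : Fin n → X)
    (r : Fin n → ℝ)
    (hr0 : ∀ i, 0 ≤ r i)
    (hr : ∀ i j, i ≠ j → r i + r j ≤ dist (p i) (p j))
    (hropt : ∀ r' : Fin n → ℝ, (∀ i, 0 ≤ r' i) →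
      (∀ i j, i ≠ j → r' i + r' j ≤ dist (p i) (p j)) → ∑ i, r' i ≤ ∑ i, r i)
    (σ : Equiv.Perm (Fin n)) (hσ : ∀ i, σ i ≠ i)
    (hσmin : ∀ σ' : Equiv.Perm (Fin n), (∀ i, σ' i ≠ i) →
      ∑ i, dist (p i) (p (σ i)) ≤ ∑ i, dist (p i) (p (σ' i))) :
    ∀ i, r i + r (σ i) = dist (p i) (p (σ i)) := by
  obtain ⟨τ, hτ1, hτ2⟩ := exists_tight_derangement n p r hr0 hr hropt
  have hτsum : ∑ i, dist (p i) (p (τ i)) = 2 * ∑ i, r i := by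
    calc ∑ i, dist (p i) (p (τ i)) = ∑ i, (r i + r (τ i)) :=
          Finset.sum_congr rfl fun i _ => (hτ2 i).symm
      _ = ∑ i, r i + ∑ i, r (τ i) := Finset.sum_add_distrib
      _ = ∑ i, r i + ∑ i, r i := by rw [Equiv.sum_comp τ r]
      _ = 2 * ∑ i, r i := by ring
  have hmin : ∑ i, dist (p i) (p (σ i)) ≤ 2 * ∑ i, r i := hτsum ▸ hσmin τ hτ1
  have hterm : ∀ i ∈ Finset.univ, 0 ≤ dist (p i) (p (σ i)) - (r i + r (σ i)) := by
    intro i _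
    have := hr i (σ i) (Ne.symm (hσ i))
    linarith
  have hsum0 : ∑ i, (dist (p i) (p (σ i)) - (r i + r (σ i))) = 0 := by
    have hle : ∑ i, (dist (p i) (p (σ i)) - (r i + r (σ i))) ≤ 0 := by
      rw [Finset.sum_sub_distrib, Finset.sum_add_distrib, Equiv.sum_comp σ r]
      linarith
    exact le_antisymm hle (Finset.sum_nonneg hterm)
  intro i
  have := (Finset.sum_eq_zero_iff_of_nonneg hterm).mp hsum0 i (Finset.mem_univ i)
  linarith
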